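/- arXiv:1005.4357 — 6 statements merged into one kernel-verified Lean document; each statement's English description precedes it below -/
import Mathlib

section
/- Let g : ℝ → ℝ be continuous, and let t > 0. If the one-sided derivatives D⁺g(t) and D⁻g(t) both exist and are finite, then the generalized derivative 𝒟g(t) exists and 𝒟g(t) = (1/2)·(D⁺g(t) + D⁻g(t)); that is, lim_{h→0⁺} (3/(2h³)) ∫₀ʰ r·(g(t+r) − g(t−r)) dr = (1/2)·(D⁺g(t) + D⁻g(t)). -/
open Filter MeasureTheory Set

/-- The generalized derivative of `g : ℝ → ℝ` at `t` is `L` if the averaged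
difference quotient from the paper converges to `L` as `h → 0⁺`.
For `t > 0` it uses `(3/(2h³)) ∫₀ʰ r (g(t+r) - g(t-r)) dr`; at `t = 0` it uses
`(3/h³) ∫₀ʰ r (g(r) - g(0)) dr`. -/
def HasGenDerivAt (g : ℝ → ℝ) (t L : ℝ) : Prop :=
  if t = 0 then
    Tendsto (fun h : ℝ => (3 / h ^ 3) * ∫ r in (0:ℝ)..h, r * (g r - g 0))
      (nhdsWithin 0 (Ioi 0)) (nhds L)
  else
    Tendsto (fun h : ℝ => (3 / (2 * h ^ 3)) * ∫ r in (0:ℝ)..h, r * (g (t + r) - g (t - r)))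
      (nhdsWithin 0 (Ioi 0)) (nhds L)

/-- `g` has right derivative `D` at `t`. -/
def HasRightDerivAt' (g : ℝ → ℝ) (t D : ℝ) : Prop :=
  Tendsto (fun ε : ℝ => (g (t + ε) - g t) / ε) (nhdsWithin 0 (Ioi 0)) (nhds D)

/-- `g` has left derivative `D` at `t`. -/
def HasLeftDerivAt' (g : ℝ → ℝ) (t D : ℝ) : Prop :=
  Tendsto (fun ε : ℝ => (g (t + ε) - g t) / ε) (nhdsWithin 0 (Iio 0)) (nhds D)

theorem generalized_deriv_eq_avg_of_one_sided_derivs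
    (g : ℝ → ℝ) (hg : Continuous g) (t : ℝ) (ht : 0 < t) (Dp Dm : ℝ)
    (hDp : HasRightDerivAt' g t Dp) (hDm : HasLeftDerivAt' g t Dm) :
    HasGenDerivAt g t ((1 / 2) * (Dp + Dm)) := by
  rw [HasGenDerivAt, if_neg ht.ne']
  rw [HasRightDerivAt'] at hDp
  rw [HasLeftDerivAt'] at hDm
  rw [Metric.tendsto_nhdsWithin_nhds] at hDp hDm ⊢
  intro ε hε
  obtain ⟨δ₁, hδ₁, H₁⟩ := hDp (ε/2) (by positivity)
  obtain ⟨δ₂, hδ₂, H₂⟩ := hDm (ε/2) (by positivity)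
  refine ⟨min δ₁ δ₂, lt_min hδ₁ hδ₂, ?_⟩
  intro h hh hd
  rw [Real.dist_eq, sub_zero] at hd
  have hh0 : (0:ℝ) < h := hh
  have habs : |h| = h := abs_of_pos hh0
  rw [habs] at hd
  have hF : Continuous (fun r : ℝ => r * (g (t + r) - g (t - r)) - r^2 * (Dp + Dm)) :=
    (continuous_id.mul ((hg.comp (continuous_const.add continuous_id)).sub
      (hg.comp (continuous_const.sub continuous_id)))).sub
      ((continuous_pow 2).mul continuous_const)
  -- key pointwise bound
  have key : ∀ r ∈ Set.Icc (0:ℝ) h,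
      |r * (g (t + r) - g (t - r)) - r^2 * (Dp + Dm)| ≤ ε * r^2 := by
    rintro r ⟨hr0, hrh⟩
    rcases eq_or_lt_of_le hr0 with rfl | hr0'
    · simp
    · have hrδ₁ : r < δ₁ := lt_of_le_of_lt hrh (lt_of_lt_of_le hd (min_le_left _ _))
      have hrδ₂ : r < δ₂ := lt_of_le_of_lt hrh (lt_of_lt_of_le hd (min_le_right _ _))
      have h1 : |(g (t + r) - g t) / r - Dp| < ε/2 := by
        have := H₁ (mem_Ioi.mpr hr0') (by rw [Real.dist_eq, sub_zero, abs_of_pos hr0']; exact hrδ₁)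
        rwa [Real.dist_eq] at this
      have h2 : |(g (t + (-r)) - g t) / (-r) - Dm| < ε/2 := by
        have := H₂ (mem_Iio.mpr (neg_neg_iff_pos.mpr hr0')) (by
          rw [Real.dist_eq, sub_zero, abs_neg, abs_of_pos hr0']; exact hrδ₂)
        rwa [Real.dist_eq] at this
      have hr : r ≠ 0 := ne_of_gt hr0'
      have hx : ∀ x : ℝ, r^2 * (x / r) = r * x := fun x => by field_simp
      have hx' : ∀ x : ℝ, r^2 * (x / -r) = -(r * x) := fun x => by
        rw [div_neg, mul_neg, hx]
      have heq : r * (g (t + r) - g (t - r)) - r^2 * (Dp + Dm)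
          = r^2 * (((g (t + r) - g t) / r - Dp) + ((g (t + (-r)) - g t) / (-r) - Dm)) := by
        have ht' : t - r = t + -r := by ring
        rw [ht']
        conv_rhs => rw [mul_add, mul_sub, mul_sub, hx, hx']
        ring
      rw [heq, abs_mul, abs_of_nonneg (sq_nonneg r)]
      have : |((g (t + r) - g t) / r - Dp) + ((g (t + (-r)) - g t) / (-r) - Dm)| ≤ ε := by
        calc _ ≤ |(g (t + r) - g t) / r - Dp| + |(g (t + (-r)) - g t) / (-r) - Dm| := abs_add_le _ _
        _ ≤ ε/2 + ε/2 := add_le_add h1.le h2.le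
        _ = ε := by ring
      calc r^2 * |_| ≤ r^2 * ε := by exact mul_le_mul_of_nonneg_left this (sq_nonneg r)
      _ = ε * r^2 := by ring
  -- split the integral
  have hint1 : IntervalIntegrable (fun r : ℝ => r * (g (t + r) - g (t - r)) - r^2 * (Dp + Dm))
      volume 0 h := hF.intervalIntegrable _ _
  have hint2 : IntervalIntegrable (fun r : ℝ => r^2 * (Dp + Dm)) volume 0 h :=
    ((continuous_pow 2).mul continuous_const).intervalIntegrable _ _
  have hsplit : (∫ r in (0:ℝ)..h, r * (g (t + r) - g (t - r)))
      = (∫ r in (0:ℝ)..h, r * (g (t + r) - g (t - r)) - r^2 * (Dp + Dm))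
        + (∫ r in (0:ℝ)..h, r^2 * (Dp + Dm)) := by
    rw [← intervalIntegral.integral_add hint1 hint2]
    congr 1; funext r; ring
  have hpow : (∫ r in (0:ℝ)..h, r^2 * (Dp + Dm)) = (Dp + Dm) * h^3 / 3 := by
    rw [intervalIntegral.integral_mul_const, integral_pow]
    ring
  -- bound the error integral
  have hbound : |∫ r in (0:ℝ)..h, r * (g (t + r) - g (t - r)) - r^2 * (Dp + Dm)|
      ≤ ε * h^3 / 3 := by
    calc |∫ r in (0:ℝ)..h, r * (g (t + r) - g (t - r)) - r^2 * (Dp + Dm)|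
        ≤ ∫ r in (0:ℝ)..h, |r * (g (t + r) - g (t - r)) - r^2 * (Dp + Dm)| :=
          intervalIntegral.abs_integral_le_integral_abs hh0.le
      _ ≤ ∫ r in (0:ℝ)..h, ε * r^2 := by
          apply intervalIntegral.integral_mono_on hh0.le
          · exact (hF.abs).intervalIntegrable _ _
          · exact (continuous_const.mul (continuous_pow 2)).intervalIntegrable _ _
          · exact key
      _ = ε * h^3 / 3 := by
          rw [intervalIntegral.integral_const_mul, integral_pow]; ring
  rw [Real.dist_eq]
  have h3 : (0:ℝ) < h^3 := by positivity
  have : (3 / (2 * h ^ 3)) * (∫ r in (0:ℝ)..h, r * (g (t + r) - g (t - r)))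
      - 1 / 2 * (Dp + Dm)
      = (3 / (2 * h ^ 3)) * (∫ r in (0:ℝ)..h, r * (g (t + r) - g (t - r)) - r^2 * (Dp + Dm)) := by
    rw [hsplit, hpow]
    generalize (∫ r in (0:ℝ)..h, r * (g (t + r) - g (t - r)) - r^2 * (Dp + Dm)) = I
    field_simp
    ring
  rw [this, abs_mul]
  have hc : |3 / (2 * h ^ 3)| = 3 / (2 * h^3) := abs_of_pos (by positivity)
  rw [hc]
  calc 3 / (2 * h^3) * |∫ r in (0:ℝ)..h, r * (g (t + r) - g (t - r)) - r^2 * (Dp + Dm)|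
      ≤ 3 / (2 * h^3) * (ε * h^3 / 3) := by
        apply mul_le_mul_of_nonneg_left hbound (by positivity)
    _ = ε / 2 := by field_simp
    _ < ε := by linarith
end

section
/- Let g : ℝ → ℝ be continuous. If the right derivative D⁺g(0) exists and is finite, then 𝒟g(0) exists and 𝒟g(0) = D⁺g(0); that is, lim_{h→0⁺} (3/h³) ∫₀ʰ r·(g(r) − g(0)) dr = D⁺g(0). -/
open Filter MeasureTheory Set

theorem generalized_deriv_at_zero_eq_right_deriv
    (g : ℝ → ℝ) (hg : Continuous g) (D : ℝ) (hD : HasRightDerivAt' g 0 D) :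
    HasGenDerivAt g 0 D := by

  unfold HasGenDerivAt
  rw [if_pos rfl]
  unfold HasRightDerivAt' at hD
  rw [Metric.tendsto_nhdsWithin_nhds] at hD ⊢
  intro ε hε
  obtain ⟨δ, hδ, hδ'⟩ := hD (ε / 2) (by positivity)
  refine ⟨δ, hδ, ?_⟩
  intro h hh hhd
  have hh0 : (0:ℝ) < h := hh
  rw [Real.dist_eq, sub_zero, abs_of_pos hh0] at hhd
  have hint : IntervalIntegrable (fun r => r * (g r - g 0)) volume 0 h :=
    Continuous.intervalIntegrable (by continuity) 0 h
  have hint2 : IntervalIntegrable (fun r : ℝ => D * r ^ 2) volume 0 h :=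
    Continuous.intervalIntegrable (by continuity) 0 h
  have hpow : (∫ r in (0:ℝ)..h, r ^ 2) = h ^ 3 / 3 := by
    rw [integral_pow]; norm_num
  have key : (3 / h ^ 3) * (∫ r in (0:ℝ)..h, r * (g r - g 0)) - D
      = (3 / h ^ 3) * ∫ r in (0:ℝ)..h, (r * (g r - g 0) - D * r ^ 2) := by
    rw [intervalIntegral.integral_sub hint hint2, mul_sub,
      intervalIntegral.integral_const_mul, hpow]
    have h3 : h ^ 3 ≠ 0 := by positivity
    field_simp
  rw [Real.dist_eq, key, abs_mul]
  have habs : |∫ r in (0:ℝ)..h, (r * (g r - g 0) - D * r ^ 2)|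
      ≤ ∫ r in (0:ℝ)..h, (ε / 2) * r ^ 2 := by
    calc |∫ r in (0:ℝ)..h, (r * (g r - g 0) - D * r ^ 2)|
        ≤ ∫ r in (0:ℝ)..h, |r * (g r - g 0) - D * r ^ 2| :=
          intervalIntegral.abs_integral_le_integral_abs hh0.le
      _ ≤ ∫ r in (0:ℝ)..h, (ε / 2) * r ^ 2 := by
          apply intervalIntegral.integral_mono_on hh0.le
          · exact (hint.sub hint2).abs
          · exact Continuous.intervalIntegrable (by continuity) 0 h
          · intro r hr
            rcases eq_or_lt_of_le hr.1 with h0 | h0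
            · simp [← h0]
            · have hr' := hδ' (show r ∈ Ioi (0:ℝ) from h0)
                (by rw [Real.dist_eq, sub_zero, abs_of_pos h0]; linarith [hr.2])
              rw [Real.dist_eq, zero_add] at hr'
              have heq : r * (g r - g 0) - D * r ^ 2 = r ^ 2 * ((g r - g 0) / r - D) := by
                field_simp
              rw [heq, abs_mul, abs_of_nonneg (by positivity : (0:ℝ) ≤ r ^ 2)]
              rw [mul_comm]
              exact mul_le_mul_of_nonneg_right hr'.le (by positivity)
  rw [intervalIntegral.integral_const_mul, hpow] at habs
  have h3 : (0:ℝ) < h ^ 3 := by positivity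
  have : |3 / h ^ 3| = 3 / h ^ 3 := abs_of_pos (by positivity)
  rw [this]
  calc 3 / h ^ 3 * |∫ r in (0:ℝ)..h, (r * (g r - g 0) - D * r ^ 2)|
      ≤ 3 / h ^ 3 * (ε / 2 * (h ^ 3 / 3)) :=
        mul_le_mul_of_nonneg_left habs (by positivity)
    _ = ε / 2 := by field_simp
    _ < ε := by linarith
end

section
/- Let g : ℝ → ℝ be convex. Then for every t > 0 the generalized derivative 𝒟g(t) exists and equals (1/2)·(g′₊(t) + g′₋(t)), where g′₊(t) and g′₋(t) are the (finite) right and left derivatives of the convex function g at t. In particular, 𝒟g(t) exists at every t > 0. -/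
open Filter MeasureTheory Set

theorem generalized_deriv_of_convex
    (g : ℝ → ℝ) (hg : ConvexOn ℝ Set.univ g) (t : ℝ) (ht : 0 < t) :
    ∃ Dp Dm : ℝ, HasRightDerivAt' g t Dp ∧ HasLeftDerivAt' g t Dm ∧
      HasGenDerivAt g t ((1 / 2) * (Dp + Dm)) := by
  set F : ℝ → ℝ := fun ε => (g (t + ε) - g t) / ε with hF
  have hmono : ∀ a b : ℝ, a ≠ 0 → b ≠ 0 → a ≤ b → F a ≤ F b := by
    intro a b ha hb hab
    have := hg.secant_mono (a := t) (x := t + a) (y := t + b)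
      (mem_univ _) (mem_univ _) (mem_univ _)
      (by simpa using ha) (by simpa using hb) (by linarith)
    simpa [hF] using this
  have hgcont : Continuous g := by
    rw [← continuousOn_univ]; exact hg.continuousOn isOpen_univ
  have hmonoP : MonotoneOn F (Ioi (0:ℝ)) := fun a ha b hb hab =>
    hmono a b (ne_of_gt ha) (ne_of_gt hb) hab
  have hbddP : BddBelow (F '' Ioi (0:ℝ)) := by
    refine ⟨F (-1), ?_⟩
    rintro x ⟨a, ha, rfl⟩
    exact hmono (-1) a (by norm_num) (ne_of_gt ha) (by linarith [mem_Ioi.1 ha])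
  have hmonoM : MonotoneOn F (Iio (0:ℝ)) := fun a ha b hb hab =>
    hmono a b (ne_of_lt ha) (ne_of_lt hb) hab
  have hbddM : BddAbove (F '' Iio (0:ℝ)) := by
    refine ⟨F 1, ?_⟩
    rintro x ⟨a, ha, rfl⟩
    exact hmono a 1 (ne_of_lt ha) (by norm_num) (by linarith [mem_Iio.1 ha])
  set Dp := sInf (F '' Ioi (0:ℝ)) with hDp
  set Dm := sSup (F '' Iio (0:ℝ)) with hDm
  have hTp : Tendsto F (nhdsWithin 0 (Ioi 0)) (nhds Dp) :=
    hmonoP.tendsto_nhdsGT hbddP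
  have hTm : Tendsto F (nhdsWithin 0 (Iio 0)) (nhds Dm) :=
    hmonoM.tendsto_nhdsLT hbddM
  refine ⟨Dp, Dm, hTp, hTm, ?_⟩
  -- the generalized derivative
  rw [HasGenDerivAt, if_neg (ne_of_gt ht)]
  have hneg : Tendsto (fun h : ℝ => -h) (nhdsWithin 0 (Ioi 0)) (nhdsWithin 0 (Iio 0)) := by
    apply Tendsto.inf
    · simpa using (continuous_neg.tendsto (0:ℝ))
    · exact tendsto_principal_principal.2 (fun x hx => by simpa using hx)
  have hTm' : Tendsto (fun h : ℝ => F (-h)) (nhdsWithin 0 (Ioi 0)) (nhds Dm) := hTm.comp hneg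
  have hDpLe : ∀ r : ℝ, 0 < r → Dp ≤ F r := fun r hr => csInf_le hbddP ⟨r, hr, rfl⟩
  have hLeDm : ∀ r : ℝ, r < 0 → F r ≤ Dm := fun r hr => le_csSup hbddM ⟨r, hr, rfl⟩
  have hint : ∀ h : ℝ, IntervalIntegrable
      (fun r => r * (g (t + r) - g (t - r))) volume 0 h := by
    intro h
    apply Continuous.intervalIntegrable
    continuity
  have hint2 : ∀ (c h : ℝ), IntervalIntegrable (fun r => c * r ^ 2) volume 0 h := by
    intro c h
    apply Continuous.intervalIntegrable
    continuity
  have hid : ∀ r : ℝ, 0 < r → r * (g (t + r) - g (t - r)) = r ^ 2 * (F r + F (-r)) := by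
    intro r hr
    have hr' : r ≠ 0 := ne_of_gt hr
    have h1 : t - r = t + (-r) := by ring
    rw [h1]
    simp only [hF]
    rw [div_add_div _ _ hr' (neg_ne_zero.2 hr')]
    field_simp
    ring
  have hval : ∀ c h : ℝ, (∫ r in (0:ℝ)..h, c * r ^ 2) = c * (h ^ 3 / 3) := by
    intro c h
    rw [intervalIntegral.integral_const_mul, integral_pow]
    norm_num
  -- key bounds for 0 < h
  have hlow : ∀ h : ℝ, 0 < h →
      (Dp + F (-h)) / 2 ≤ (3 / (2 * h ^ 3)) * ∫ r in (0:ℝ)..h, r * (g (t + r) - g (t - r)) := by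
    intro h hh
    have hIle : (Dp + F (-h)) * (h ^ 3 / 3) ≤ ∫ r in (0:ℝ)..h, r * (g (t + r) - g (t - r)) := by
      rw [← hval (Dp + F (-h)) h]
      apply intervalIntegral.integral_mono_on hh.le (hint2 _ h) (hint h)
      intro r hr
      rcases eq_or_lt_of_le hr.1 with h0 | h0
      · simp [← h0]
      · rw [hid r h0]
        have b1 : Dp ≤ F r := hDpLe r h0
        have b2 : F (-h) ≤ F (-r) :=
          hmono (-h) (-r) (by linarith) (by linarith) (by linarith [hr.2])
        nlinarith [sq_nonneg r]
    have hpos : (0:ℝ) < 3 / (2 * h ^ 3) := by positivity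
    have := mul_le_mul_of_nonneg_left hIle hpos.le
    have heq : (3 / (2 * h ^ 3)) * ((Dp + F (-h)) * (h ^ 3 / 3)) = (Dp + F (-h)) / 2 := by
      field_simp
    linarith [heq ▸ this]
  have hhigh : ∀ h : ℝ, 0 < h →
      (3 / (2 * h ^ 3)) * (∫ r in (0:ℝ)..h, r * (g (t + r) - g (t - r))) ≤ (F h + Dm) / 2 := by
    intro h hh
    have hIle : (∫ r in (0:ℝ)..h, r * (g (t + r) - g (t - r))) ≤ (F h + Dm) * (h ^ 3 / 3) := by
      rw [← hval (F h + Dm) h]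
      apply intervalIntegral.integral_mono_on hh.le (hint h) (hint2 _ h)
      intro r hr
      rcases eq_or_lt_of_le hr.1 with h0 | h0
      · simp [← h0]
      · rw [hid r h0]
        have b1 : F r ≤ F h := hmono r h (ne_of_gt h0) (ne_of_gt hh) hr.2
        have b2 : F (-r) ≤ Dm := hLeDm (-r) (by linarith)
        nlinarith [sq_nonneg r]
    have hpos : (0:ℝ) < 3 / (2 * h ^ 3) := by positivity
    have := mul_le_mul_of_nonneg_left hIle hpos.le
    have heq : (3 / (2 * h ^ 3)) * ((F h + Dm) * (h ^ 3 / 3)) = (F h + Dm) / 2 := by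
      field_simp
    linarith [heq ▸ this]
  -- squeeze
  have hL : Tendsto (fun h : ℝ => (Dp + F (-h)) / 2) (nhdsWithin 0 (Ioi 0))
      (nhds ((1 / 2) * (Dp + Dm))) := by
    have := ((tendsto_const_nhds (x := Dp)).add hTm').div_const (2:ℝ)
    convert this using 2
    ring
  have hU : Tendsto (fun h : ℝ => (F h + Dm) / 2) (nhdsWithin 0 (Ioi 0))
      (nhds ((1 / 2) * (Dp + Dm))) := by
    have := (hTp.add (tendsto_const_nhds (x := Dm))).div_const (2:ℝ)
    convert this using 2
    ring
  refine tendsto_of_tendsto_of_tendsto_of_le_of_le' hL hU ?_ ?_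
  · filter_upwards [self_mem_nhdsWithin] with h hh
    exact hlow h hh
  · filter_upwards [self_mem_nhdsWithin] with h hh
    exact hhigh h hh
end

section
/- Let X : ℝ → ℝ be locally (Lebesgue) integrable and define g(t) = ∫₀ᵗ X(s) ds. If t > 0 is a Lebesgue point of X, i.e. (1/(2ε)) ∫_{t−ε}^{t+ε} |X(s) − X(t)| ds → 0 as ε → 0⁺, then the generalized derivative 𝒟g(t) exists and 𝒟g(t) = X(t). -/
open Filter MeasureTheory Set

theorem generalized_deriv_at_lebesgue_point
    (X : ℝ → ℝ) (hX : LocallyIntegrable X volume) (t : ℝ) (ht : 0 < t)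
    (hleb : Tendsto (fun ε : ℝ => (1 / (2 * ε)) * ∫ s in (t - ε)..(t + ε), |X s - X t|)
      (nhdsWithin 0 (Ioi 0)) (nhds 0)) :
    HasGenDerivAt (fun u => ∫ s in (0:ℝ)..u, X s) t (X t) := by
  have hXi : ∀ a b : ℝ, IntervalIntegrable X volume a b := fun a b =>
    (hX.integrableOn_isCompact isCompact_uIcc).intervalIntegrable
  set Y : ℝ → ℝ := fun s => X s - X t with hY
  have hYi : ∀ a b : ℝ, IntervalIntegrable Y volume a b := fun a b =>
    (hXi a b).sub intervalIntegrable_const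
  have hAi : ∀ a b : ℝ, IntervalIntegrable (fun s => |Y s|) volume a b := fun a b =>
    (hYi a b).abs
  set D : ℝ → ℝ := fun r => ∫ s in (t - r)..(t + r), Y s with hD
  set E : ℝ → ℝ := fun r => ∫ s in (t - r)..(t + r), |Y s| with hE
  -- continuity of D and E
  have hDeq : ∀ r, D r = (∫ s in t..(t + r), Y s) - ∫ s in t..(t - r), Y s := by
    intro r
    rw [intervalIntegral.integral_interval_sub_left (hYi t (t + r)) (hYi t (t - r))]
  have hEeq : ∀ r, E r = (∫ s in t..(t + r), |Y s|) - ∫ s in t..(t - r), |Y s| := by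
    intro r
    rw [intervalIntegral.integral_interval_sub_left (hAi t (t + r)) (hAi t (t - r))]
  have hDc : Continuous D := by
    have := intervalIntegral.continuous_primitive hYi t
    simp only [funext hDeq]
    exact (this.comp (continuous_const.add continuous_id)).sub
      (this.comp (continuous_const.sub continuous_id))
  have hEc : Continuous E := by
    have := intervalIntegral.continuous_primitive hAi t
    simp only [funext hEeq]
    exact (this.comp (continuous_const.add continuous_id)).sub
      (this.comp (continuous_const.sub continuous_id))
  -- E nonneg and bound |D| ≤ E for r ≥ 0
  have hEnn : ∀ r : ℝ, 0 ≤ r → 0 ≤ E r := fun r hr =>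
    intervalIntegral.integral_nonneg (by linarith) (fun s _ => abs_nonneg _)
  have hDE : ∀ r : ℝ, 0 ≤ r → |D r| ≤ E r := fun r hr =>
    intervalIntegral.abs_integral_le_integral_abs (by linarith)
  -- rewrite the averaged quotient
  have key : ∀ h : ℝ, 0 < h →
      (3 / (2 * h ^ 3)) * (∫ r in (0:ℝ)..h,
        r * ((∫ s in (0:ℝ)..(t + r), X s) - ∫ s in (0:ℝ)..(t - r), X s)) - X t
      = (3 / (2 * h ^ 3)) * ∫ r in (0:ℝ)..h, r * D r := by
    intro h hh
    have h1 : ∀ r : ℝ, (∫ s in (0:ℝ)..(t + r), X s) - (∫ s in (0:ℝ)..(t - r), X s)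
        = D r + 2 * r * X t := by
      intro r
      rw [intervalIntegral.integral_interval_sub_left (hXi 0 (t + r)) (hXi 0 (t - r))]
      have : (∫ s in (t - r)..(t + r), X s) - ∫ s in (t - r)..(t + r), (X t : ℝ) = D r :=
        (intervalIntegral.integral_sub (hXi _ _) intervalIntegrable_const).symm
      rw [intervalIntegral.integral_const] at this
      have h2 : (∫ s in (t - r)..(t + r), X s) = D r + (t + r - (t - r)) • X t := by
        linarith [this]
      rw [h2, smul_eq_mul]; ring
    have h3 : (∫ r in (0:ℝ)..h, r * ((∫ s in (0:ℝ)..(t + r), X s) - ∫ s in (0:ℝ)..(t - r), X s))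
        = ∫ r in (0:ℝ)..h, (r * D r + 2 * r ^ 2 * X t) := by
      apply intervalIntegral.integral_congr
      intro r _; simp only [h1 r]; ring
    have hrD : IntervalIntegrable (fun r => r * D r) volume 0 h :=
      (continuous_id.mul hDc).intervalIntegrable _ _
    have h4 : (∫ r in (0:ℝ)..h, (r * D r + 2 * r ^ 2 * X t))
        = (∫ r in (0:ℝ)..h, r * D r) + ∫ r in (0:ℝ)..h, 2 * r ^ 2 * X t :=
      intervalIntegral.integral_add hrD
        (((continuous_const.mul (continuous_pow 2)).mul continuous_const).intervalIntegrable _ _)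
    have h5 : (∫ r in (0:ℝ)..h, 2 * r ^ 2 * X t) = 2 / 3 * h ^ 3 * X t := by
      have : (∫ r in (0:ℝ)..h, 2 * r ^ 2 * X t)
          = (2 * X t) * ∫ r in (0:ℝ)..h, r ^ 2 := by
        rw [← intervalIntegral.integral_const_mul]
        apply intervalIntegral.integral_congr
        intro r _; ring
      rw [this, integral_pow]; ring
    rw [h3, h4, h5]
    have hh3 : h ^ 3 ≠ 0 := by positivity
    field_simp
    ring
  -- the error bound tends to zero
  set B : ℝ → ℝ := fun h => (3 / (2 * h ^ 3)) * ∫ r in (0:ℝ)..h, r * E r with hB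
  have hBto : Tendsto B (nhdsWithin 0 (Ioi 0)) (nhds 0) := by
    rw [Metric.tendsto_nhdsWithin_nhds] at hleb ⊢
    intro ε hε
    obtain ⟨δ, hδ, hδ'⟩ := hleb (ε / 2) (by linarith)
    refine ⟨δ, hδ, fun {h} hh hhδ => ?_⟩
    have hh0 : (0:ℝ) < h := hh
    have hbound : ∀ r ∈ Icc (0:ℝ) h, r * E r ≤ ε * r ^ 2 := by
      intro r ⟨hr0, hrh⟩
      rcases eq_or_lt_of_le hr0 with hr0' | hr0'
      · simp [← hr0']
      · have hrδ : dist r 0 < δ := by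
          have e1 : dist r 0 = r := by rw [Real.dist_eq, sub_zero, abs_of_pos hr0']
          have e2 : dist h 0 = h := by rw [Real.dist_eq, sub_zero, abs_of_pos hh0]
          rw [e2] at hhδ; rw [e1]; linarith
        have := hδ' hr0' hrδ
        rw [Real.dist_eq, sub_zero] at this
        have hEr : (1 / (2 * r)) * E r < ε / 2 := (le_abs_self _).trans_lt this
        have hEr2 : E r ≤ ε / 2 * (2 * r) := by
          have h2r : (0:ℝ) < 2 * r := by linarith
          rw [div_mul_eq_mul_div, one_mul, div_lt_iff₀ h2r] at hEr
          linarith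
        calc r * E r ≤ r * (ε / 2 * (2 * r)) := mul_le_mul_of_nonneg_left hEr2 hr0
          _ = ε * r ^ 2 := by ring
    have hint : (∫ r in (0:ℝ)..h, r * E r) ≤ ∫ r in (0:ℝ)..h, ε * r ^ 2 :=
      intervalIntegral.integral_mono_on hh0.le
        ((continuous_id.mul hEc).intervalIntegrable _ _)
        ((continuous_const.mul (continuous_pow 2)).intervalIntegrable _ _) hbound
    have hint2 : (∫ r in (0:ℝ)..h, ε * r ^ 2) = ε * (h ^ 3 / 3) := by
      rw [intervalIntegral.integral_const_mul, integral_pow]; norm_num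
    have hintnn : (0:ℝ) ≤ ∫ r in (0:ℝ)..h, r * E r :=
      intervalIntegral.integral_nonneg hh0.le
        (fun r ⟨hr0, _⟩ => mul_nonneg hr0 (hEnn r hr0))
    have hcoef : (0:ℝ) < 3 / (2 * h ^ 3) := by positivity
    have hBle : B h ≤ ε / 2 := by
      have := mul_le_mul_of_nonneg_left (hint.trans (le_of_eq hint2)) hcoef.le
      calc B h ≤ 3 / (2 * h ^ 3) * (ε * (h ^ 3 / 3)) := this
        _ = ε / 2 := by
            have h3 : h ^ 3 ≠ 0 := by positivity
            field_simp
    have hBnn : 0 ≤ B h := mul_nonneg hcoef.le hintnn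
    rw [Real.dist_eq, sub_zero, abs_of_nonneg hBnn]
    linarith
  -- conclude via squeeze
  have hne : t ≠ 0 := ne_of_gt ht
  rw [HasGenDerivAt, if_neg hne]
  rw [tendsto_iff_dist_tendsto_zero]
  refine squeeze_zero' (Eventually.of_forall fun h => dist_nonneg) ?_ hBto
  filter_upwards [self_mem_nhdsWithin] with h hh
  have hh0 : (0:ℝ) < h := hh
  have hcoef : (0:ℝ) < 3 / (2 * h ^ 3) := by positivity
  have hle : |∫ r in (0:ℝ)..h, r * D r| ≤ ∫ r in (0:ℝ)..h, r * E r := by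
    calc |∫ r in (0:ℝ)..h, r * D r| ≤ ∫ r in (0:ℝ)..h, |r * D r| :=
          intervalIntegral.abs_integral_le_integral_abs hh0.le
      _ ≤ ∫ r in (0:ℝ)..h, r * E r := by
          apply intervalIntegral.integral_mono_on hh0.le
            ((continuous_id.mul hDc).abs.intervalIntegrable _ _)
            ((continuous_id.mul hEc).intervalIntegrable _ _)
          intro r ⟨hr0, _⟩
          show |r * D r| ≤ r * E r
          rw [abs_mul, abs_of_nonneg hr0]
          exact mul_le_mul_of_nonneg_left (hDE r hr0) hr0
  show dist _ _ ≤ B h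
  rw [Real.dist_eq, key h hh0, hB, abs_mul, abs_of_pos hcoef]
  exact mul_le_mul_of_nonneg_left hle hcoef.le
end

section
/- Let X : ℝ → ℝ be locally (Lebesgue) integrable and define g(t) = ∫₀ᵗ X(s) ds. Then there is a set Z ⊂ (0,∞) of Lebesgue measure zero such that for every t ∈ (0,∞) \ Z the generalized derivative 𝒟g(t) exists and 𝒟g(t) = X(t); i.e. 𝒟g = X Lebesgue-almost everywhere on (0,∞). -/
open Filter MeasureTheory Set

/-- If the symmetric quotient `F r / (2r)` tends to `L` as `r → 0⁺`, then so does the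
weighted average `(3/(2h³)) ∫₀ʰ r F(r) dr`. -/
lemma key_tendsto (F : ℝ → ℝ) (hF : Continuous F) (L : ℝ)
    (h : Tendsto (fun r => F r / (2 * r)) (nhdsWithin 0 (Ioi 0)) (nhds L)) :
    Tendsto (fun h : ℝ => (3 / (2 * h ^ 3)) * ∫ r in (0:ℝ)..h, r * F r)
      (nhdsWithin 0 (Ioi 0)) (nhds L) := by
  rw [Metric.tendsto_nhdsWithin_nhds] at h ⊢
  intro ε hε
  obtain ⟨δ, hδ, hd⟩ := h (ε / 2) (by linarith)
  refine ⟨δ, hδ, fun {b} hb hbd => ?_⟩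
  have hb0 : (0:ℝ) < b := hb
  have hbδ : b < δ := by
    rwa [Real.dist_eq, sub_zero, abs_of_pos hb0] at hbd
  have hcont2 : Continuous fun r : ℝ => 2 * L * r ^ 2 :=
    continuous_const.mul (continuous_pow 2)
  have hconte : Continuous fun r : ℝ => ε * r ^ 2 :=
    continuous_const.mul (continuous_pow 2)
  have hint1 : IntervalIntegrable (fun r => r * F r) volume 0 b :=
    (continuous_id.mul hF).intervalIntegrable _ _
  have hint2 : IntervalIntegrable (fun r : ℝ => 2 * L * r ^ 2) volume 0 b :=
    hcont2.intervalIntegrable _ _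
  have hsplit : (∫ r in (0:ℝ)..b, r * F r)
      = (∫ r in (0:ℝ)..b, (r * F r - 2 * L * r ^ 2)) + 2 * L * (b ^ 3 / 3) := by
    rw [intervalIntegral.integral_sub hint1 hint2]
    have : (∫ r in (0:ℝ)..b, 2 * L * r ^ 2) = 2 * L * (b ^ 3 / 3) := by
      rw [intervalIntegral.integral_const_mul, integral_pow]
      norm_num
    rw [this]; ring
  have hbound : |∫ r in (0:ℝ)..b, (r * F r - 2 * L * r ^ 2)| ≤ ε * (b ^ 3 / 3) := by
    have h1 : |∫ r in (0:ℝ)..b, (r * F r - 2 * L * r ^ 2)|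
        ≤ ∫ r in (0:ℝ)..b, |r * F r - 2 * L * r ^ 2| :=
      intervalIntegral.abs_integral_le_integral_abs hb0.le
    have h2 : (∫ r in (0:ℝ)..b, |r * F r - 2 * L * r ^ 2|)
        ≤ ∫ r in (0:ℝ)..b, ε * r ^ 2 := by
      apply intervalIntegral.integral_mono_on hb0.le
      · exact ((continuous_id.mul hF).sub hcont2).abs.intervalIntegrable _ _
      · exact hconte.intervalIntegrable _ _
      · intro r hr
        rcases eq_or_lt_of_le hr.1 with h0 | h0
        · simp [← h0]
        · have heq : r * F r - 2 * L * r ^ 2 = 2 * r ^ 2 * (F r / (2 * r) - L) := by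
            field_simp
          rw [heq, abs_mul, abs_of_pos (by positivity : (0:ℝ) < 2 * r ^ 2)]
          have : |F r / (2 * r) - L| ≤ ε / 2 := by
            have := hd (show r ∈ Ioi (0:ℝ) from h0)
              (by rw [Real.dist_eq, sub_zero, abs_of_pos h0]; linarith [hr.2])
            rw [Real.dist_eq] at this; linarith
          nlinarith [sq_nonneg r]
    have h3 : (∫ r in (0:ℝ)..b, ε * r ^ 2) = ε * (b ^ 3 / 3) := by
      rw [intervalIntegral.integral_const_mul, integral_pow]; norm_num
    linarith
  rw [Real.dist_eq]
  have hc : ((3 / (2 * b ^ 3)) * ∫ r in (0:ℝ)..b, r * F r) - L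
      = (3 / (2 * b ^ 3)) * ∫ r in (0:ℝ)..b, (r * F r - 2 * L * r ^ 2) := by
    rw [hsplit]
    generalize (∫ r in (0:ℝ)..b, (r * F r - 2 * L * r ^ 2)) = I
    have hb3 : b ^ 3 ≠ 0 := by positivity
    field_simp
    ring
  rw [hc, abs_mul, abs_of_pos (by positivity : (0:ℝ) < 3 / (2 * b ^ 3))]
  have heq4 : 3 / (2 * b ^ 3) * (ε * (b ^ 3 / 3)) = ε / 2 := by
    field_simp
  calc 3 / (2 * b ^ 3) * |∫ r in (0:ℝ)..b, (r * F r - 2 * L * r ^ 2)|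
      ≤ 3 / (2 * b ^ 3) * (ε * (b ^ 3 / 3)) :=
        mul_le_mul_of_nonneg_left hbound (by positivity)
    _ = ε / 2 := heq4
    _ < ε := by linarith

theorem generalized_deriv_ae_eq_integrand
    (X : ℝ → ℝ) (hX : LocallyIntegrable X volume) :
    ∃ Z : Set ℝ, Z ⊆ Ioi 0 ∧ volume Z = 0 ∧
      ∀ t ∈ Ioi 0 \ Z, HasGenDerivAt (fun u => ∫ s in (0:ℝ)..u, X s) t (X t) := by
  have hXi : ∀ a b : ℝ, IntervalIntegrable X volume a b := by
    intro a b
    rw [intervalIntegrable_iff]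
    exact (hX.integrableOn_isCompact isCompact_uIcc).mono_set Ioc_subset_Icc_self
  set g : ℝ → ℝ := fun u => ∫ s in (0:ℝ)..u, X s with hg
  have hgc : Continuous g := intervalIntegral.continuous_primitive hXi 0
  -- a.e. Lebesgue differentiation over symmetric balls
  have hae : ∀ᵐ t : ℝ,
      Tendsto (fun r => ⨍ y in Metric.closedBall t r, X y) (nhdsWithin 0 (Ioi 0))
        (nhds (X t)) := by
    filter_upwards [IsUnifLocDoublingMeasure.ae_tendsto_average volume hX 1] with t ht
    exact ht (fun _ => t) id tendsto_id
      (eventually_nhdsWithin_of_forall fun r (hr : r ∈ Ioi (0:ℝ)) => by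
        simp [Metric.mem_closedBall]; linarith [hr.out])
  -- symmetric difference quotient = ball average
  have hsym : ∀ t : ℝ, 0 < t → ∀ r : ℝ, 0 < r →
      (g (t + r) - g (t - r)) / (2 * r) = ⨍ y in Metric.closedBall t r, X y := by
    intro t ht r hr
    have h1 : g (t + r) - g (t - r) = ∫ s in (t - r)..(t + r), X s :=
      intervalIntegral.integral_interval_sub_left (hXi 0 (t + r)) (hXi 0 (t - r))
    rw [setAverage_eq, Real.closedBall_eq_Icc, Real.volume_real_Icc, h1,
      intervalIntegral.integral_of_le (by linarith : t - r ≤ t + r),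
      ← integral_Icc_eq_integral_Ioc]
    have : t + r - (t - r) = 2 * r := by ring
    rw [this, max_eq_left (by linarith), smul_eq_mul]
    ring
  refine ⟨Ioi 0 ∩ {t | ¬ Tendsto (fun r => ⨍ y in Metric.closedBall t r, X y)
      (nhdsWithin 0 (Ioi 0)) (nhds (X t))}, inter_subset_left, ?_, ?_⟩
  · refine le_antisymm ?_ zero_le
    calc volume _ ≤ volume {t : ℝ | ¬ Tendsto (fun r => ⨍ y in Metric.closedBall t r, X y)
          (nhdsWithin 0 (Ioi 0)) (nhds (X t))} := measure_mono inter_subset_right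
      _ = 0 := hae
  · rintro t ⟨ht, htZ⟩
    have ha : Tendsto (fun r => ⨍ y in Metric.closedBall t r, X y) (nhdsWithin 0 (Ioi 0))
        (nhds (X t)) := by
      by_contra hcon
      exact htZ ⟨ht, hcon⟩
    have ht0 : (0:ℝ) < t := ht
    have hF : Continuous fun r => g (t + r) - g (t - r) :=
      (hgc.comp (continuous_const.add continuous_id)).sub
        (hgc.comp (continuous_const.sub continuous_id))
    have hquot : Tendsto (fun r => (g (t + r) - g (t - r)) / (2 * r))
        (nhdsWithin 0 (Ioi 0)) (nhds (X t)) :=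
      ha.congr' (eventually_nhdsWithin_of_forall fun r (hr : r ∈ Ioi (0:ℝ)) =>
        (hsym t ht0 r hr).symm)
    have hmain := key_tendsto _ hF (X t) hquot
    simp only [HasGenDerivAt, if_neg ht0.ne']
    exact hmain
end

section
/- (Chain rule, pathwise core.) Let S : ℝ → ℝ be continuous, let f : ℝ → ℝ be continuously differentiable, let X : ℝ → ℝ be continuous, and define h(t) = ∫₀ᵗ f′(S(s))·X(s) ds for t ≥ 0. Then for every t ≥ 0 the generalized derivative 𝒟h(t) exists and 𝒟h(t) = f′(S(t))·X(t); that is, 𝒟h(t) equals f′(S(t)) times the generalized derivative at t of t ↦ ∫₀ᵗ X(s) ds. -/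
open Filter MeasureTheory Set

lemma prim_cont {φ : ℝ → ℝ} (hφ : Continuous φ) :
    Continuous (fun u : ℝ => ∫ s in (0:ℝ)..u, φ s) :=
  intervalIntegral.continuous_primitive (fun a b => hφ.intervalIntegrable a b) 0

lemma aux_pos (φ : ℝ → ℝ) (hφ : Continuous φ) (t : ℝ) :
    Tendsto (fun h : ℝ => (3 / (2 * h ^ 3)) *
      ∫ r in (0:ℝ)..h, r * ((∫ s in (0:ℝ)..(t+r), φ s) - ∫ s in (0:ℝ)..(t-r), φ s))
      (nhdsWithin 0 (Ioi 0)) (nhds (φ t)) := by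
  rw [Metric.tendsto_nhdsWithin_nhds]
  intro ε hε
  obtain ⟨δ, hδ, hδε⟩ := Metric.continuousAt_iff.mp (hφ.continuousAt (x := t)) (ε/2) (by linarith)
  refine ⟨δ, hδ, fun h hh hhd => ?_⟩
  have hh0 : 0 < h := hh
  rw [Real.dist_eq, sub_zero, abs_of_pos hh0] at hhd
  -- ψ r := ∫_{t-r}^{t+r} (φ s - φ t) ds
  set ψ : ℝ → ℝ := fun r => ∫ s in (t-r)..(t+r), (φ s - φ t) with hψdef
  have hφt : Continuous (fun s => φ s - φ t) := hφ.sub continuous_const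
  have hψcont : Continuous ψ := by
    have := prim_cont hφt
    have : Continuous fun r : ℝ => (∫ s in (0:ℝ)..(t+r), (φ s - φ t)) -
        ∫ s in (0:ℝ)..(t-r), (φ s - φ t) :=
      ((prim_cont hφt).comp (continuous_const.add continuous_id)).sub
        ((prim_cont hφt).comp (continuous_const.sub continuous_id))
    refine this.congr fun r => ?_
    exact intervalIntegral.integral_interval_sub_left (hφt.intervalIntegrable _ _)
      (hφt.intervalIntegrable _ _)
  have key : ∀ r : ℝ, r * ((∫ s in (0:ℝ)..(t+r), φ s) - ∫ s in (0:ℝ)..(t-r), φ s)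
      = r * ψ r + 2 * φ t * r ^ 2 := by
    intro r
    have h1 : ((∫ s in (0:ℝ)..(t+r), φ s) - ∫ s in (0:ℝ)..(t-r), φ s)
        = ∫ s in (t-r)..(t+r), φ s :=
      intervalIntegral.integral_interval_sub_left (hφ.intervalIntegrable _ _)
        (hφ.intervalIntegrable _ _)
    have h2 : ψ r = (∫ s in (t-r)..(t+r), φ s) - 2*r*φ t := by
      show (∫ s in (t-r)..(t+r), (φ s - φ t)) = _
      rw [intervalIntegral.integral_sub (hφ.intervalIntegrable _ _)
        (intervalIntegrable_const), intervalIntegral.integral_const]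
      simp only [smul_eq_mul]
      ring
    rw [h1, h2]; ring
  have hint1 : IntervalIntegrable (fun r => r * ψ r) volume 0 h :=
    (continuous_id.mul hψcont).intervalIntegrable _ _
  have hint2 : IntervalIntegrable (fun r : ℝ => 2 * φ t * r ^ 2) volume 0 h :=
    (Continuous.mul continuous_const (continuous_pow 2)).intervalIntegrable _ _
  have hsplit : (∫ r in (0:ℝ)..h, r * ((∫ s in (0:ℝ)..(t+r), φ s) - ∫ s in (0:ℝ)..(t-r), φ s))
      = (∫ r in (0:ℝ)..h, r * ψ r) + 2 * φ t * h ^ 3 / 3 := by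
    rw [intervalIntegral.integral_congr (g := fun r => r * ψ r + 2 * φ t * r ^ 2)
      (fun r _ => key r)]
    rw [intervalIntegral.integral_add hint1 hint2]
    congr 1
    rw [intervalIntegral.integral_const_mul, integral_pow]
    ring
  -- bound on J := ∫₀ʰ r ψ r
  have hψbound : ∀ r ∈ uIoc (0:ℝ) h, ‖r * ψ r‖ ≤ ε * r ^ 2 := by
    intro r hr
    rw [uIoc_of_le hh0.le] at hr
    obtain ⟨hr0, hrh⟩ := hr
    have hb : ∀ s ∈ uIoc (t - r) (t + r), ‖φ s - φ t‖ ≤ ε / 2 := by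
      intro s hs
      rw [uIoc_of_le (by linarith : t - r ≤ t + r)] at hs
      have : dist s t < δ := by
        rw [Real.dist_eq, abs_lt]
        constructor <;> [linarith [hs.1]; linarith [hs.2, hrh, hhd]]
      exact le_of_lt (hδε this)
    have := intervalIntegral.norm_integral_le_of_norm_le_const hb
    have habs : |t + r - (t - r)| = 2 * r := by rw [abs_of_nonneg (by linarith)]; ring
    rw [habs] at this
    calc ‖r * ψ r‖ = r * ‖ψ r‖ := by
          rw [norm_mul, Real.norm_eq_abs, abs_of_nonneg hr0.le]
      _ ≤ r * (ε / 2 * (2 * r)) := mul_le_mul_of_nonneg_left this hr0.le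
      _ = ε * r ^ 2 := by ring
    
  have hJ : ‖∫ r in (0:ℝ)..h, r * ψ r‖ ≤ ε * h ^ 3 / 3 := by
    have hbint : IntervalIntegrable (fun r : ℝ => ε * r ^ 2) volume 0 h :=
      (continuous_const.mul (continuous_pow 2)).intervalIntegrable _ _
    have hb := intervalIntegral.norm_integral_le_abs_of_norm_le
      ((ae_restrict_mem measurableSet_uIoc).mono hψbound) hbint
    have hval : (∫ r in (0:ℝ)..h, ε * r ^ 2) = ε * h ^ 3 / 3 := by
      rw [intervalIntegral.integral_const_mul, integral_pow]
      norm_num [mul_div_assoc]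
    rw [hval, abs_of_nonneg (by positivity)] at hb
    exact hb
  rw [Real.dist_eq, hsplit]
  have heq : (3 / (2 * h ^ 3)) * ((∫ r in (0:ℝ)..h, r * ψ r) + 2 * φ t * h ^ 3 / 3) - φ t
      = (3 / (2 * h ^ 3)) * ∫ r in (0:ℝ)..h, r * ψ r := by
    field_simp
    ring
  rw [heq, abs_mul, abs_of_pos (by positivity : (0:ℝ) < 3 / (2 * h ^ 3))]
  rw [Real.norm_eq_abs] at hJ
  calc 3 / (2 * h ^ 3) * |∫ r in (0:ℝ)..h, r * ψ r|
      ≤ 3 / (2 * h ^ 3) * (ε * h ^ 3 / 3) := by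
        exact mul_le_mul_of_nonneg_left hJ (by positivity)
    _ = ε / 2 := by field_simp
    _ < ε := by linarith

lemma aux_zero (φ : ℝ → ℝ) (hφ : Continuous φ) :
    Tendsto (fun h : ℝ => (3 / h ^ 3) *
      ∫ r in (0:ℝ)..h, r * ((∫ s in (0:ℝ)..r, φ s) - ∫ s in (0:ℝ)..(0:ℝ), φ s))
      (nhdsWithin 0 (Ioi 0)) (nhds (φ 0)) := by
  rw [Metric.tendsto_nhdsWithin_nhds]
  intro ε hε
  obtain ⟨δ, hδ, hδε⟩ := Metric.continuousAt_iff.mp (hφ.continuousAt (x := (0:ℝ))) (ε/2)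
    (by linarith)
  refine ⟨δ, hδ, fun h hh hhd => ?_⟩
  have hh0 : 0 < h := hh
  rw [Real.dist_eq, sub_zero, abs_of_pos hh0] at hhd
  set ψ : ℝ → ℝ := fun r => ∫ s in (0:ℝ)..r, (φ s - φ 0) with hψdef
  have hφt : Continuous (fun s => φ s - φ 0) := hφ.sub continuous_const
  have hψcont : Continuous ψ := prim_cont hφt
  have key : ∀ r : ℝ, r * ((∫ s in (0:ℝ)..r, φ s) - ∫ s in (0:ℝ)..(0:ℝ), φ s)
      = r * ψ r + φ 0 * r ^ 2 := by
    intro r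
    have h2 : ψ r = (∫ s in (0:ℝ)..r, φ s) - r * φ 0 := by
      show (∫ s in (0:ℝ)..r, (φ s - φ 0)) = _
      rw [intervalIntegral.integral_sub (hφ.intervalIntegrable _ _)
        (intervalIntegrable_const), intervalIntegral.integral_const]
      simp only [smul_eq_mul]
      ring
    rw [intervalIntegral.integral_same, h2]
    ring
  have hint1 : IntervalIntegrable (fun r => r * ψ r) volume 0 h :=
    (continuous_id.mul hψcont).intervalIntegrable _ _
  have hint2 : IntervalIntegrable (fun r : ℝ => φ 0 * r ^ 2) volume 0 h :=
    (continuous_const.mul (continuous_pow 2)).intervalIntegrable _ _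
  have hsplit : (∫ r in (0:ℝ)..h, r * ((∫ s in (0:ℝ)..r, φ s) - ∫ s in (0:ℝ)..(0:ℝ), φ s))
      = (∫ r in (0:ℝ)..h, r * ψ r) + φ 0 * h ^ 3 / 3 := by
    rw [intervalIntegral.integral_congr (g := fun r => r * ψ r + φ 0 * r ^ 2)
      (fun r _ => key r)]
    rw [intervalIntegral.integral_add hint1 hint2]
    congr 1
    rw [intervalIntegral.integral_const_mul, integral_pow]
    ring
  have hψbound : ∀ r ∈ uIoc (0:ℝ) h, ‖r * ψ r‖ ≤ ε / 2 * r ^ 2 := by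
    intro r hr
    rw [uIoc_of_le hh0.le] at hr
    obtain ⟨hr0, hrh⟩ := hr
    have hb : ∀ s ∈ uIoc (0:ℝ) r, ‖φ s - φ 0‖ ≤ ε / 2 := by
      intro s hs
      rw [uIoc_of_le hr0.le] at hs
      have : dist s 0 < δ := by
        rw [Real.dist_eq, sub_zero, abs_lt]
        constructor <;> [linarith [hs.1]; linarith [hs.2, hrh, hhd]]
      exact le_of_lt (hδε this)
    have hbb := intervalIntegral.norm_integral_le_of_norm_le_const hb
    rw [sub_zero, abs_of_nonneg hr0.le] at hbb
    calc ‖r * ψ r‖ = r * ‖ψ r‖ := by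
          rw [norm_mul, Real.norm_eq_abs, abs_of_nonneg hr0.le]
      _ ≤ r * (ε / 2 * r) := mul_le_mul_of_nonneg_left hbb hr0.le
      _ = ε / 2 * r ^ 2 := by ring
  have hJ : ‖∫ r in (0:ℝ)..h, r * ψ r‖ ≤ ε / 2 * h ^ 3 / 3 := by
    have hbint : IntervalIntegrable (fun r : ℝ => ε / 2 * r ^ 2) volume 0 h :=
      (continuous_const.mul (continuous_pow 2)).intervalIntegrable _ _
    have hb := intervalIntegral.norm_integral_le_abs_of_norm_le
      ((ae_restrict_mem measurableSet_uIoc).mono hψbound) hbint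
    have hval : (∫ r in (0:ℝ)..h, ε / 2 * r ^ 2) = ε / 2 * h ^ 3 / 3 := by
      rw [intervalIntegral.integral_const_mul, integral_pow]
      norm_num [mul_div_assoc]
    rw [hval, abs_of_nonneg (by positivity)] at hb
    exact hb
  rw [Real.dist_eq, hsplit]
  have heq : (3 / h ^ 3) * ((∫ r in (0:ℝ)..h, r * ψ r) + φ 0 * h ^ 3 / 3) - φ 0
      = (3 / h ^ 3) * ∫ r in (0:ℝ)..h, r * ψ r := by
    field_simp
    ring
  rw [heq, abs_mul, abs_of_pos (by positivity : (0:ℝ) < 3 / h ^ 3)]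
  rw [Real.norm_eq_abs] at hJ
  calc 3 / h ^ 3 * |∫ r in (0:ℝ)..h, r * ψ r|
      ≤ 3 / h ^ 3 * (ε / 2 * h ^ 3 / 3) := by
        exact mul_le_mul_of_nonneg_left hJ (by positivity)
    _ = ε / 2 := by field_simp
    _ < ε := by linarith

theorem stochastic_chain_rule_pathwise
    (S f X : ℝ → ℝ) (hS : Continuous S) (hf : ContDiff ℝ 1 f) (hX : Continuous X) :
    ∀ t : ℝ, 0 ≤ t →
      HasGenDerivAt (fun u => ∫ s in (0:ℝ)..u, deriv f (S s) * X s) t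
        (deriv f (S t) * X t) := by
  intro t ht
  have hφ : Continuous (fun s => deriv f (S s) * X s) :=
    ((hf.continuous_deriv le_rfl).comp hS).mul hX
  unfold HasGenDerivAt
  split_ifs with h0
  · subst h0
    exact aux_zero _ hφ
  · exact aux_pos _ hφ t
end
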